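/- For positive integers n, k, t, the maximum number of t-rooks in {0,...,n-1}^{kt} with no rook attacking another equals at most k·n^{kt-1} and at least k·n^{k(t-1)}·(n-1)^{k-1}; consequently lim_{n→∞} b_{n,kt,t}/n^{kt-1} = k. -/

import Mathlib

/-- A rook in `{0,...,n-1}^m`: a point together with a set of chosen coordinate
directions. -/
abbrev Rook (n m : ℕ) := (Fin m → Fin n) × Finset (Fin m)

/-- A rook attacks every point differing from its location in exactly one of its
chosen coordinates. -/
def Rook.attacks {n m : ℕ} (R : Rook n m) (q : Fin m → Fin n) : Prop :=
  ∃ i ∈ R.2, q i ≠ R.1 i ∧ ∀ j, j ≠ i → q j = R.1 j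

/-- `S` is a packing of `t`-rooks: each rook has `t` chosen directions, locations
are distinct, and no rook attacks another rook's location. -/
def IsPacking (n m t : ℕ) (S : Finset (Rook n m)) : Prop :=
  (∀ R ∈ S, R.2.card = t) ∧
  ∀ R1 ∈ S, ∀ R2 ∈ S, R1 ≠ R2 → R1.1 ≠ R2.1 ∧ ¬ R1.attacks R2.1

/-- `bval n m t` : the maximum size of a packing of `t`-rooks in `{0,...,n-1}^m`. -/
noncomputable def bval (n m t : ℕ) : ℕ :=
  sSup {s | ∃ S : Finset (Rook n m), IsPacking n m t S ∧ S.card = s}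


open Finset

set_option linter.unusedSectionVars false
set_option linter.unusedVariables false
set_option linter.unusedTactic false

section Helpers
variable (n : ℕ) [NeZero n]
def fc : Fin n → ZMod n := fun a => ((a : ℕ) : ZMod n)
def cf : ZMod n → Fin n := fun z => ⟨z.val, ZMod.val_lt z⟩
lemma fc_cf (z : ZMod n) : fc n (cf n z) = z := ZMod.natCast_rightInverse z
lemma fc_injective : Function.Injective (fc n) := by
  intro a b hab
  have ha := ZMod.val_cast_of_lt a.isLt
  have hb := ZMod.val_cast_of_lt b.isLt
  have h : ((a : ℕ) : ZMod n).val = ((b : ℕ) : ZMod n).val := congrArg ZMod.val hab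
  rw [ha, hb] at h
  exact Fin.ext h
lemma cf_fc (a : Fin n) : cf n (fc n a) = a := fc_injective n (fc_cf n _)
end Helpers

lemma card_fiber_eval (n m' : ℕ) [NeZero n] (i : Fin (m'+1)) (a : Fin n) :
    (Finset.univ.filter (fun f : Fin (m'+1) → Fin n => f i = a)).card = n ^ m' := by
  have hcard : n ^ m' = (Finset.univ : Finset (Fin m' → Fin n)).card := by
    simp [Finset.card_univ]
  rw [hcard]
  refine Finset.card_bij' (fun f _ => (Fin.removeNth i f : Fin m' → Fin n))
    (fun g _ => (i.insertNth a g : Fin (m'+1) → Fin n)) (fun f _ => Finset.mem_univ _)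
    ?_ ?_ ?_
  · intro g _
    simp
  · intro f hf
    simp only [Finset.mem_filter, Finset.mem_univ, true_and] at hf
    subst hf
    exact Fin.insertNth_self_removeNth i f
  · intro g _
    simp

lemma upper_aux (n m' t : ℕ) [NeZero n] (S : Finset (Rook n (m'+1)))
    (hS : IsPacking n (m'+1) t S) : t * S.card ≤ (m'+1) * n ^ m' := by
  classical
  have key : (S.sigma (fun R => R.2)).card ≤
      ((Finset.univ : Finset (Fin (m'+1))).sigma
        (fun i => Finset.univ.filter (fun f : Fin (m'+1) → Fin n => f i = 0))).card := by
    apply Finset.card_le_card_of_injOn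
      (fun p => ⟨p.2, Function.update p.1.1 p.2 0⟩)
    · rintro ⟨R, i⟩ hp
      simp only [Finset.mem_sigma] at hp ⊢
      refine Finset.mem_sigma.2 ⟨Finset.mem_univ _, ?_⟩
      simp [Function.update_self]
    · rintro ⟨R1, i1⟩ h1 ⟨R2, i2⟩ h2 heq
      simp only [Finset.mem_sigma, Finset.mem_coe] at h1 h2
      obtain ⟨hR1, hi1⟩ := h1
      obtain ⟨hR2, hi2⟩ := h2
      have hii : i1 = i2 := congrArg Sigma.fst heq
      subst hii
      have hupd : Function.update R1.1 i1 0 = Function.update R2.1 i1 0 := by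
        have := congrArg Sigma.snd heq
        simpa using this
      have hoff : ∀ j, j ≠ i1 → R2.1 j = R1.1 j := by
        intro j hj
        have := congrFun hupd j
        simpa [Function.update_of_ne hj] using this.symm
      by_cases hR : R1 = R2
      · subst hR; rfl
      · exfalso
        obtain ⟨hne, hnat⟩ := hS.2 R1 hR1 R2 hR2 hR
        by_cases hloc : R2.1 i1 = R1.1 i1
        · apply hne
          funext j
          by_cases hj : j = i1
          · subst hj; exact hloc.symm
          · exact (hoff j hj).symm
        · exact hnat ⟨i1, hi1, hloc, hoff⟩
  rw [Finset.card_sigma, Finset.card_sigma] at key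
  have h1 : ∑ R ∈ S, R.2.card = t * S.card := by
    rw [Finset.sum_congr rfl hS.1, Finset.sum_const, smul_eq_mul, mul_comm]
  have h2 : ∑ i : Fin (m'+1), (Finset.univ.filter
      (fun f : Fin (m'+1) → Fin n => f i = 0)).card = (m'+1) * n ^ m' := by
    rw [Finset.sum_congr rfl (fun i _ => card_fiber_eval n m' i 0)]
    simp [mul_comm]
  rw [h1] at key
  rw [h2] at key
  exact key

lemma card_sum_fiber (n t' : ℕ) [NeZero n] (c : ZMod n) :
    (Finset.univ.filter (fun g : Fin (t'+1) → Fin n => ∑ b, fc n (g b) = c)).card = n ^ t' := by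
  have hcard : n ^ t' = (Finset.univ : Finset (Fin t' → Fin n)).card := by
    simp [Finset.card_univ]
  rw [hcard]
  refine Finset.card_bij' (fun g _ => (Fin.tail g : Fin t' → Fin n))
    (fun h _ => (Fin.cons (cf n (c - ∑ b, fc n (h b))) h : Fin (t'+1) → Fin n))
    (fun g _ => Finset.mem_univ _) ?_ ?_ ?_
  · intro h _
    simp only [Finset.mem_filter, Finset.mem_univ, true_and]
    rw [Fin.sum_univ_succ]
    simp only [Fin.cons_zero, Fin.cons_succ]
    rw [fc_cf]
    have : ∑ b : Fin t', fc n (h b) = ∑ i : Fin t', fc n (h i) := rfl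
    rw [sub_add_cancel]
  · intro g hg
    simp only [Finset.mem_filter, Finset.mem_univ, true_and] at hg
    have h0 : fc n (g 0) = c - ∑ b : Fin t', fc n (Fin.tail g b) := by
      rw [← hg, Fin.sum_univ_succ]
      simp [Fin.tail]
    conv_rhs => rw [← Fin.cons_self_tail g]
    congr 1
    rw [← cf_fc n (g 0), h0]
  · intro h _
    exact Fin.tail_cons _ _

lemma card_sum_fiber_ne (n t' : ℕ) [NeZero n] :
    (Finset.univ.filter (fun g : Fin (t'+1) → Fin n => ¬ (∑ b, fc n (g b) = 0))).card
      = n ^ t' * (n - 1) := by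
  have h := Finset.card_filter_add_card_filter_not (s := (Finset.univ : Finset (Fin (t'+1) → Fin n)))
    (p := fun g => ∑ b, fc n (g b) = 0)
  rw [card_sum_fiber n t' 0] at h
  have huniv : (Finset.univ : Finset (Fin (t'+1) → Fin n)).card = n ^ (t'+1) := by
    simp [Finset.card_univ]
  rw [huniv] at h
  have hp : n ^ (t'+1) = n ^ t' * n := by ring
  rw [hp] at h
  have hgoal : n ^ t' * (n - 1) = n ^ t' * n - n ^ t' := by
    rw [Nat.mul_sub, mul_one]
  rw [hgoal]
  exact Nat.eq_sub_of_add_eq' h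

section Construction

/-- the block sum -/
def bsum (n k t : ℕ) [NeZero n] (j : Fin k) (x : Fin (k*t) → Fin n) : ZMod n :=
  ∑ b : Fin t, fc n (x (finProdFinEquiv (j, b)))

lemma bsum_congr (n k t : ℕ) [NeZero n] (j : Fin k) (x y : Fin (k*t) → Fin n)
    (h : ∀ b : Fin t, y (finProdFinEquiv (j, b)) = x (finProdFinEquiv (j, b))) :
    bsum n k t j y = bsum n k t j x :=
  Finset.sum_congr rfl (fun b _ => by rw [h b])

lemma bsum_ne (n k t : ℕ) [NeZero n] (j : Fin k) (b0 : Fin t) (x y : Fin (k*t) → Fin n)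
    (hne : y (finProdFinEquiv (j, b0)) ≠ x (finProdFinEquiv (j, b0)))
    (h : ∀ b : Fin t, b ≠ b0 → y (finProdFinEquiv (j, b)) = x (finProdFinEquiv (j, b))) :
    bsum n k t j y ≠ bsum n k t j x := by
  intro heq
  have hsub : (0 : ZMod n) = fc n (y (finProdFinEquiv (j, b0))) - fc n (x (finProdFinEquiv (j, b0))) := by
    have : bsum n k t j y - bsum n k t j x =
        ∑ b : Fin t, (fc n (y (finProdFinEquiv (j, b))) - fc n (x (finProdFinEquiv (j, b)))) := by
      rw [Finset.sum_sub_distrib]; rfl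
    rw [heq, sub_self] at this
    rw [Finset.sum_eq_single_of_mem b0 (Finset.mem_univ _)] at this
    · exact this
    · intro b _ hb
      rw [h b hb, sub_self]
  have : fc n (y (finProdFinEquiv (j, b0))) = fc n (x (finProdFinEquiv (j, b0))) := by
    have := hsub.symm
    rwa [sub_eq_zero] at this
  exact hne (fc_injective n this)

/-- block of coordinates -/
def blk (k t : ℕ) (j : Fin k) : Finset (Fin (k*t)) :=
  Finset.univ.filter (fun c => (finProdFinEquiv.symm c).1 = j)

lemma mem_blk (k t : ℕ) (j : Fin k) (c : Fin (k*t)) :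
    c ∈ blk k t j ↔ (finProdFinEquiv.symm c).1 = j := by
  simp [blk]

lemma blk_card (k t : ℕ) (j : Fin k) : (blk k t j).card = t := by
  have : blk k t j = Finset.univ.image (fun b : Fin t => finProdFinEquiv (j, b)) := by
    ext c
    simp only [mem_blk, Finset.mem_image, Finset.mem_univ, true_and]
    constructor
    · intro h
      refine ⟨(finProdFinEquiv.symm c).2, ?_⟩
      rw [← h]
      exact finProdFinEquiv.apply_symm_apply c
    · rintro ⟨b, rfl⟩
      simp
  rw [this, Finset.card_image_of_injective _
    (fun b1 b2 h => by simpa using (finProdFinEquiv.injective h))]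
  simp

/-- locations for block j -/
def locSet (n k t : ℕ) [NeZero n] (j : Fin k) : Finset (Fin (k*t) → Fin n) :=
  Finset.univ.filter (fun x => bsum n k t j x = 0 ∧ ∀ i, i ≠ j → bsum n k t i x ≠ 0)

lemma mem_locSet (n k t : ℕ) [NeZero n] (j : Fin k) (x : Fin (k*t) → Fin n) :
    x ∈ locSet n k t j ↔ (bsum n k t j x = 0 ∧ ∀ i, i ≠ j → bsum n k t i x ≠ 0) := by
  simp [locSet]

/-- the packing -/
def pack (n k t : ℕ) [NeZero n] : Finset (Rook n (k*t)) :=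
  Finset.univ.biUnion (fun j : Fin k => (locSet n k t j).image (fun x => (x, blk k t j)))

lemma mem_pack (n k t : ℕ) [NeZero n] (R : Rook n (k*t)) :
    R ∈ pack n k t ↔ ∃ j : Fin k, R.1 ∈ locSet n k t j ∧ R.2 = blk k t j := by
  simp only [pack, Finset.mem_biUnion, Finset.mem_univ, true_and, Finset.mem_image]
  constructor
  · rintro ⟨j, x, hx, rfl⟩
    exact ⟨j, hx, rfl⟩
  · rintro ⟨j, hx, h2⟩
    exact ⟨j, R.1, hx, by rw [← h2]⟩

lemma pack_isPacking (n k t : ℕ) [NeZero n] : IsPacking n (k*t) t (pack n k t) := by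
  constructor
  · intro R hR
    obtain ⟨j, _, h2⟩ := (mem_pack n k t R).1 hR
    rw [h2, blk_card]
  · intro R1 hR1 R2 hR2 hne
    obtain ⟨j1, hx1, hb1⟩ := (mem_pack n k t R1).1 hR1
    obtain ⟨j2, hx2, hb2⟩ := (mem_pack n k t R2).1 hR2
    rw [mem_locSet] at hx1 hx2
    have hloc : R1.1 ≠ R2.1 := by
      intro h
      have hj : j1 = j2 := by
        by_contra hj
        exact (hx1.2 j2 (Ne.symm hj)) (h ▸ hx2.1)
      apply hne
      apply Prod.ext h
      rw [hb1, hb2, hj]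
    refine ⟨hloc, ?_⟩
    rintro ⟨c, hc, hcne, hcoff⟩
    rw [hb1, mem_blk] at hc
    -- c is in block j1 of R1.  write c = e (j1, b0)
    set b0 : Fin t := (finProdFinEquiv.symm c).2 with hb0
    have hce : c = finProdFinEquiv (j1, b0) := by
      rw [hb0, ← hc]
      exact (finProdFinEquiv.apply_symm_apply c).symm
    -- bsum j1 of R2.1 differs from bsum j1 of R1.1
    have hdiff : bsum n k t j1 R2.1 ≠ bsum n k t j1 R1.1 := by
      apply bsum_ne n k t j1 b0
      · rw [← hce]; exact hcne
      · intro b hb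
        apply hcoff
        rw [hce]
        intro h
        exact hb (congrArg Prod.snd (finProdFinEquiv.injective h))
    by_cases hj : j2 = j1
    · subst hj
      rw [hx2.1, hx1.1] at hdiff
      exact hdiff rfl
    · -- bsum j2 of R2.1 equals bsum j2 of R1.1 since c not in block j2
      have hsame : bsum n k t j2 R2.1 = bsum n k t j2 R1.1 := by
        apply bsum_congr
        intro b
        apply hcoff
        rw [hce]
        intro h
        exact hj (congrArg Prod.fst (finProdFinEquiv.injective h))
      rw [hx2.1] at hsame
      exact (hx1.2 j2 hj) hsame.symm

end Construction


lemma upper_aux' (n m t : ℕ) [NeZero n] (hm : 0 < m) (S : Finset (Rook n m))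
    (hS : IsPacking n m t S) : t * S.card ≤ m * n ^ (m - 1) := by
  obtain ⟨m', rfl⟩ : ∃ m', m = m' + 1 := ⟨m - 1, (Nat.succ_pred_eq_of_pos hm).symm⟩
  simpa using upper_aux n m' t S hS

lemma locSet_card (n k' t' : ℕ) [NeZero n] (j : Fin (k'+1)) :
    (locSet n (k'+1) (t'+1) j).card = n ^ t' * (n ^ t' * (n - 1)) ^ k' := by
  classical
  set A : Fin (k'+1) → Finset (Fin (t'+1) → Fin n) := fun j' =>
    if j' = j then Finset.univ.filter (fun g => ∑ b, fc n (g b) = 0)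
    else Finset.univ.filter (fun g => ¬ (∑ b, fc n (g b) = 0)) with hA
  have hbij : (locSet n (k'+1) (t'+1) j).card = (Fintype.piFinset A).card := by
    refine Finset.card_bij'
      (fun x _ => (fun j' b => x (finProdFinEquiv (j', b)) : ∀ j' : Fin (k'+1), Fin (t'+1) → Fin n))
      (fun g _ => (fun c => g (finProdFinEquiv.symm c).1 (finProdFinEquiv.symm c).2 :
        Fin ((k'+1)*(t'+1)) → Fin n)) ?_ ?_ ?_ ?_
    · intro x hx
      rw [mem_locSet] at hx
      rw [Fintype.mem_piFinset]
      intro j'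
      by_cases h : j' = j
      · subst h
        simp only [hA, if_pos rfl, Finset.mem_filter, Finset.mem_univ, true_and]
        exact hx.1
      · simp only [hA, if_neg h, Finset.mem_filter, Finset.mem_univ, true_and]
        exact hx.2 j' h
    · intro g hg
      rw [Fintype.mem_piFinset] at hg
      rw [mem_locSet]
      have hb : ∀ j' : Fin (k'+1), bsum n (k'+1) (t'+1) j'
          (fun c => g (finProdFinEquiv.symm c).1 (finProdFinEquiv.symm c).2)
          = ∑ b, fc n (g j' b) := by
        intro j'
        unfold bsum
        apply Finset.sum_congr rfl
        intro b _
        simp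
      constructor
      · rw [hb j]
        have := hg j
        simp only [hA, if_pos rfl, Finset.mem_filter, Finset.mem_univ, true_and] at this
        exact this
      · intro i hi
        rw [hb i]
        have := hg i
        simp only [hA, if_neg hi, Finset.mem_filter, Finset.mem_univ, true_and] at this
        exact this
    · intro x _
      funext c
      exact congrArg x (finProdFinEquiv.apply_symm_apply c)
    · intro g _
      funext j' b
      simp
  rw [hbij, Fintype.card_piFinset]
  rw [← Finset.mul_prod_erase Finset.univ _ (Finset.mem_univ j)]
  have h1 : (A j).card = n ^ t' := by
    simp only [hA, if_pos rfl]
    exact card_sum_fiber n t' 0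
  have h2 : ∏ j' ∈ Finset.univ.erase j, (A j').card = (n ^ t' * (n - 1)) ^ k' := by
    have hconst : ∀ j' ∈ Finset.univ.erase j, (A j').card = n ^ t' * (n - 1) := by
      intro j' hj'
      have hj'' : j' ≠ j := (Finset.mem_erase.1 hj').1
      simp only [hA, if_neg hj'']
      exact card_sum_fiber_ne n t'
    rw [Finset.prod_congr rfl hconst, Finset.prod_const,
      Finset.card_erase_of_mem (Finset.mem_univ j), Finset.card_univ]
    simp
  rw [h1, h2]

lemma pack_card (n k' t' : ℕ) [NeZero n] :
    (pack n (k'+1) (t'+1)).card = (k'+1) * (n ^ t' * (n ^ t' * (n - 1)) ^ k') := by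
  classical
  unfold pack
  have hdisj : ∀ j1 ∈ (Finset.univ : Finset (Fin (k'+1))), ∀ j2 ∈ Finset.univ, j1 ≠ j2 →
      Disjoint ((locSet n (k'+1) (t'+1) j1).image (fun x => (x, blk (k'+1) (t'+1) j1)))
        ((locSet n (k'+1) (t'+1) j2).image (fun x => (x, blk (k'+1) (t'+1) j2))) := by
    intro j1 _ j2 _ hj
    rw [Finset.disjoint_left]
    rintro R hR1 hR2
    simp only [Finset.mem_image] at hR1 hR2
    obtain ⟨x, hx, rfl⟩ := hR1
    obtain ⟨y, hy, hxy⟩ := hR2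
    have hyx : y = x := congrArg Prod.fst hxy
    subst hyx
    rw [mem_locSet] at hx hy
    exact (hx.2 j2 (Ne.symm hj)) hy.1
  rw [Finset.card_biUnion hdisj]
  have him : ∀ j ∈ (Finset.univ : Finset (Fin (k'+1))),
      ((locSet n (k'+1) (t'+1) j).image (fun x => (x, blk (k'+1) (t'+1) j))).card
        = n ^ t' * (n ^ t' * (n - 1)) ^ k' := by
    intro j _
    rw [Finset.card_image_of_injective _ (fun x y h => congrArg Prod.fst h), locSet_card]
  rw [Finset.sum_congr rfl him, Finset.sum_const, Finset.card_univ, smul_eq_mul]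
  simp


lemma upper_bound_set (n k' t' : ℕ) [NeZero n] (s : ℕ)
    (hs : s ∈ {s | ∃ S : Finset (Rook n ((k'+1) * (t'+1))), IsPacking n ((k'+1)*(t'+1)) (t'+1) S ∧ S.card = s}) :
    s ≤ (k'+1) * n ^ ((k'+1)*(t'+1) - 1) := by
  obtain ⟨S, hS, rfl⟩ := hs
  have hm : 0 < (k'+1)*(t'+1) := by positivity
  have h := upper_aux' n _ (t'+1) hm S hS
  have hrw : (k'+1)*(t'+1) * n ^ ((k'+1)*(t'+1)-1)
      = (t'+1) * ((k'+1) * n ^ ((k'+1)*(t'+1)-1)) := by ring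
  rw [hrw] at h
  exact Nat.le_of_mul_le_mul_left h (Nat.succ_pos t')

lemma bval_le (n k' t' : ℕ) [NeZero n] :
    bval n ((k'+1) * (t'+1)) (t'+1) ≤ (k'+1) * n ^ ((k'+1)*(t'+1) - 1) := by
  apply csSup_le
  · exact ⟨0, ∅, ⟨fun R h => absurd h (Finset.notMem_empty R),
      fun R1 h => absurd h (Finset.notMem_empty R1)⟩, Finset.card_empty⟩
  · exact fun s hs => upper_bound_set n k' t' s hs

lemma le_bval (n k' t' : ℕ) [NeZero n] :
    (k'+1) * n ^ ((k'+1) * t') * (n - 1) ^ k' ≤ bval n ((k'+1) * (t'+1)) (t'+1) := by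
  apply le_csSup
  · exact ⟨(k'+1) * n ^ ((k'+1)*(t'+1) - 1), fun s hs => upper_bound_set n k' t' s hs⟩
  · refine ⟨pack n (k'+1) (t'+1), pack_isPacking n (k'+1) (t'+1), ?_⟩
    rw [pack_card]
    ring

theorem packing_asymptotics (k t : ℕ) (hk : 0 < k) (ht : 0 < t) :
    (∀ n : ℕ, 0 < n → bval n (k * t) t ≤ k * n ^ (k * t - 1)) ∧
    (∀ n : ℕ, 0 < n → k * n ^ (k * (t - 1)) * (n - 1) ^ (k - 1) ≤ bval n (k * t) t) ∧
    Filter.Tendsto (fun n : ℕ => (bval n (k * t) t : ℝ) / (n : ℝ) ^ (k * t - 1))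
      Filter.atTop (nhds (k : ℝ)) := by
  obtain ⟨k', rfl⟩ : ∃ k', k = k' + 1 := ⟨k - 1, (Nat.succ_pred_eq_of_pos hk).symm⟩
  obtain ⟨t', rfl⟩ : ∃ t', t = t' + 1 := ⟨t - 1, (Nat.succ_pred_eq_of_pos ht).symm⟩
  have hupper : ∀ n : ℕ, 0 < n →
      bval n ((k'+1) * (t'+1)) (t'+1) ≤ (k'+1) * n ^ ((k'+1)*(t'+1) - 1) := by
    intro n hn
    haveI : NeZero n := ⟨hn.ne'⟩
    exact bval_le n k' t'
  have hlower : ∀ n : ℕ, 0 < n →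
      (k'+1) * n ^ ((k'+1) * ((t'+1) - 1)) * (n - 1) ^ ((k'+1) - 1)
        ≤ bval n ((k'+1) * (t'+1)) (t'+1) := by
    intro n hn
    haveI : NeZero n := ⟨hn.ne'⟩
    simpa using le_bval n k' t'
  refine ⟨hupper, hlower, ?_⟩
  -- exponent arithmetic
  have he : (k'+1)*(t'+1) - 1 = (k'+1)*t' + k' := by
    have h1 : (k'+1)*(t'+1) = ((k'+1)*t' + k') + 1 := by ring
    rw [h1, Nat.add_sub_cancel]
  apply tendsto_of_tendsto_of_tendsto_of_le_of_le'
    (g := fun n : ℕ => ((k'+1 : ℕ) : ℝ) * (1 - 1/(n:ℝ)) ^ k')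
    (h := fun _ : ℕ => ((k'+1 : ℕ) : ℝ))
  · have h0 : Filter.Tendsto (fun n : ℕ => 1 - 1/(n:ℝ)) Filter.atTop (nhds 1) := by
      have hc : Filter.Tendsto (fun _ : ℕ => (1:ℝ)) Filter.atTop (nhds 1) := tendsto_const_nhds
      simpa using hc.sub tendsto_one_div_atTop_nhds_zero_nat
    have h1 := (h0.pow k').const_mul ((k'+1 : ℕ) : ℝ)
    simpa using h1
  · exact tendsto_const_nhds
  · -- lower bound eventually
    rw [Filter.eventually_atTop]
    refine ⟨1, fun n hn => ?_⟩
    have hn0 : (0:ℝ) < (n:ℝ) := by exact_mod_cast hn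
    have hne : (n:ℝ) ≠ 0 := hn0.ne'
    have hle := hlower n hn
    simp only [Nat.add_sub_cancel] at hle
    have hcast : ((k'+1 : ℕ) : ℝ) * (n:ℝ) ^ ((k'+1)*t') * ((n:ℝ) - 1) ^ k'
        ≤ (bval n ((k'+1) * (t'+1)) (t'+1) : ℝ) := by
      have := Nat.cast_le (α := ℝ) |>.2 hle
      push_cast [Nat.cast_sub hn] at this
      exact_mod_cast this
    have hpow : (0:ℝ) < (n:ℝ) ^ ((k'+1)*(t'+1) - 1) := by positivity
    have step : ((k'+1 : ℕ) : ℝ) * (1 - 1/(n:ℝ)) ^ k'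
        = ((k'+1 : ℕ) : ℝ) * (n:ℝ) ^ ((k'+1)*t') * ((n:ℝ) - 1) ^ k'
          / (n:ℝ) ^ ((k'+1)*(t'+1) - 1) := by
      rw [he, pow_add]
      have h11 : (1 - 1/(n:ℝ)) = ((n:ℝ) - 1) / (n:ℝ) := by field_simp
      rw [h11, div_pow]
      field_simp
    rw [step]
    exact (div_le_div_iff_of_pos_right hpow).mpr hcast
  · -- upper bound eventually
    rw [Filter.eventually_atTop]
    refine ⟨1, fun n hn => ?_⟩
    have hn0 : (0:ℝ) < (n:ℝ) := by exact_mod_cast hn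
    have hpow : (0:ℝ) < (n:ℝ) ^ ((k'+1)*(t'+1) - 1) := by positivity
    rw [div_le_iff₀ hpow]
    have := Nat.cast_le (α := ℝ) |>.2 (hupper n hn)
    push_cast at this ⊢
    convert this using 1
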